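/- Let 𝒜 be an S-ring over a finite abelian group H, T a basic set of 𝒜, and k an integer coprime to |H|. Then the set T^(k) = {h^k : h ∈ T} is also a basic set of 𝒜. -/

import Mathlib

open scoped Classical Pointwise

noncomputable section

variable {H : Type*}

/-- The simple quantity of a subset `T` of `H` in the group algebra `ℚ H`. -/
def simpleQ [Group H] [Fintype H] (T : Set H) : MonoidAlgebra ℚ H :=
  ∑ h ∈ T.toFinset, MonoidAlgebra.single h (1 : ℚ)

/-- An S-ring over a finite group `H`: a partition of `H` containing `{1}`,
closed under inversion, whose simple quantities span a subalgebra of `ℚ H`. -/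
structure SRing (H : Type*) [Group H] [Fintype H] where
  basicSets : Set (Set H)
  exists_unique_mem : ∀ h : H, ∃! T, T ∈ basicSets ∧ h ∈ T
  nonempty_of_mem : ∀ T ∈ basicSets, T.Nonempty
  one_mem : ({1} : Set H) ∈ basicSets
  inv_mem : ∀ T ∈ basicSets, T⁻¹ ∈ basicSets
  mul_mem : ∀ T ∈ basicSets, ∀ S ∈ basicSets,
    simpleQ T * simpleQ S ∈ Submodule.span ℚ (simpleQ '' basicSets)

namespace SRing

variable [Group H] [Fintype H]

/-- The underlying ℚ-subspace of the S-ring. -/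
def carrier (A : SRing H) : Submodule ℚ (MonoidAlgebra ℚ H) :=
  Submodule.span ℚ (simpleQ '' A.basicSets)

/-- `S` is an `𝒜`-subset: its simple quantity lies in `𝒜`. -/
def IsSubset (A : SRing H) (S : Set H) : Prop := simpleQ S ∈ A.carrier

/-- The thin radical of the S-ring. -/
def thin (A : SRing H) : Set H := {g | ({g} : Set H) ∈ A.basicSets}

end SRing

/-- The radical of a subset `S`: elements `h` with `hS = Sh = S`. -/
def radSet [Group H] (S : Set H) : Set H := {h | {h} * S = S ∧ S * {h} = S}

/-- The automorphism group of the Cayley digraph `Cay(H, T)`. -/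
def cayAut [Group H] (T : Set H) : Subgroup (Equiv.Perm H) where
  carrier := {g | ∀ x y : H, y * x⁻¹ ∈ T ↔ g y * (g x)⁻¹ ∈ T}
  one_mem' := by intro x y; simp
  mul_mem' := by
    intro a b ha hb x y
    simpa [Equiv.Perm.mul_apply] using (hb x y).trans (ha (b x) (b y))
  inv_mem' := by
    intro a ha x y
    simpa using (ha (a⁻¹ x) (a⁻¹ y)).symm

/-- The automorphism group of an S-ring. -/
def SRing.aut [Group H] [Fintype H] (A : SRing H) : Subgroup (Equiv.Perm H) :=
  ⨅ T ∈ A.basicSets, cayAut T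

/-- The right regular representation of `H` inside `Sym(H)`. -/
def rightRegular (H : Type*) [Group H] : Subgroup (Equiv.Perm H) where
  carrier := Set.range fun h : H => Equiv.mulRight h
  one_mem' := ⟨1, by ext x; simp⟩
  mul_mem' := by
    rintro _ _ ⟨a, rfl⟩ ⟨b, rfl⟩
    exact ⟨b * a, by ext x; simp [mul_assoc]⟩
  inv_mem' := by
    rintro _ ⟨a, rfl⟩
    exact ⟨a⁻¹, by ext x; simp⟩

/-- The orbit of `h` under the stabilizer of the identity in `G ≤ Sym(H)`. -/
def orbitOfStab [Group H] (G : Subgroup (Equiv.Perm H)) (h : H) : Set H :=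
  {x | ∃ g ∈ G, g 1 = 1 ∧ g h = x}

/-- A Schurian S-ring: its basic sets are the orbits of the identity-stabilizer
of some overgroup of the right regular representation. -/
def SRing.IsSchurian [Group H] [Fintype H] (A : SRing H) : Prop :=
  ∃ G : Subgroup (Equiv.Perm H), rightRegular H ≤ G ∧
    A.basicSets = {S | ∃ h : H, S = orbitOfStab G h}

/-- A p-S-ring: all basic sets have `p`-power size. -/
def SRing.IsPSRing [Group H] [Fintype H] (A : SRing H) (p : ℕ) : Prop :=
  ∀ T ∈ A.basicSets, ∃ k : ℕ, Nat.card T = p ^ k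

/-- A decomposable S-ring: a nontrivial `E/F`-wreath product. -/
def SRing.Decomposable [Group H] [Fintype H] (A : SRing H) : Prop :=
  ∃ E F : Subgroup H, F.Normal ∧ F ≤ E ∧ E ≠ ⊤ ∧ F ≠ ⊥ ∧
    A.IsSubset ↑E ∧ A.IsSubset ↑F ∧
    ∀ T ∈ A.basicSets, T ⊆ ((E : Set H))ᶜ → (F : Set H) ⊆ radSet T

/-- The 2-closure of a permutation group `G ≤ Sym(Ω)`: all permutations
preserving every `G`-orbit on `Ω × Ω`. -/
def twoClosure {Ω : Type*} (G : Subgroup (Equiv.Perm Ω)) : Subgroup (Equiv.Perm Ω) where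
  carrier := {γ | ∀ a b : Ω, ∃ g ∈ G, g a = γ a ∧ g b = γ b}
  one_mem' := fun a b => ⟨1, G.one_mem, rfl, rfl⟩
  mul_mem' := by
    intro γ δ hγ hδ a b
    obtain ⟨g, hg, hga, hgb⟩ := hδ a b
    obtain ⟨g', hg', hg'a, hg'b⟩ := hγ (δ a) (δ b)
    exact ⟨g' * g, G.mul_mem hg' hg, by simp [Equiv.Perm.mul_apply, hga, hg'a],
      by simp [Equiv.Perm.mul_apply, hgb, hg'b]⟩
  inv_mem' := by
    intro γ hγ a b
    obtain ⟨g, hg, hga, hgb⟩ := hγ (γ⁻¹ a) (γ⁻¹ b)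
    have h1 : g (γ⁻¹ a) = a := by rw [hga]; exact γ.apply_symm_apply a
    have h2 : g (γ⁻¹ b) = b := by rw [hgb]; exact γ.apply_symm_apply b
    refine ⟨g⁻¹, G.inv_mem hg, ?_, ?_⟩
    · exact g.injective (by rw [h1]; exact g.apply_symm_apply a)
    · exact g.injective (by rw [h2]; exact g.apply_symm_apply b)


section Helpers
set_option linter.unusedSectionVars false

variable [CommGroup H] [Fintype H]

/-- simple quantity over a general semiring -/
def sgen (R : Type*) [Semiring R] (T : Set H) : MonoidAlgebra R H :=
  ∑ h ∈ T.toFinset, MonoidAlgebra.single h (1 : R)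

lemma sgen_apply (R : Type*) [Semiring R] (T : Set H) (h : H) :
    (sgen R T).coeff h = if h ∈ T then 1 else 0 := by
  classical
  rw [sgen, MonoidAlgebra.coeff_sum, Finsupp.finset_sum_apply]
  simp_rw [MonoidAlgebra.coeff_single_apply]
  rw [Finset.sum_ite_eq' T.toFinset h (fun _ => (1 : R))]
  simp

def castHomMA (R : Type*) [CommRing R] : MonoidAlgebra ℤ H →+* MonoidAlgebra R H :=
  MonoidAlgebra.liftNCRingHom (MonoidAlgebra.singleOneRingHom.comp (Int.castRingHom R))
    (MonoidAlgebra.of R H) (fun _ _ => Commute.all _ _)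

lemma castHomMA_single (R : Type*) [CommRing R] (h : H) (n : ℤ) :
    castHomMA R (MonoidAlgebra.single h n) = MonoidAlgebra.single h (n : R) := by
  show MonoidAlgebra.liftNC _ _ (MonoidAlgebra.single h n) = _
  rw [MonoidAlgebra.liftNC_single]
  show MonoidAlgebra.single 1 ((n : ℤ) : R) * MonoidAlgebra.single h 1 = _
  rw [MonoidAlgebra.single_mul_single, one_mul, mul_one]

lemma castHomMA_sgen (R : Type*) [CommRing R] (T : Set H) :
    castHomMA R (sgen ℤ T) = sgen R T := by
  rw [sgen, map_sum, sgen]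
  exact Finset.sum_congr rfl fun h _ => by rw [castHomMA_single]; norm_num

lemma castHomMA_apply (R : Type*) [CommRing R] (x : MonoidAlgebra ℤ H) (h : H) :
    (castHomMA R x).coeff h = ((x.coeff h : ℤ) : R) := by
  induction x using MonoidAlgebra.induction_linear with
  | zero => simp
  | add f g hf hg =>
      rw [map_add]
      show (castHomMA R f + castHomMA R g).coeff h = _
      rw [MonoidAlgebra.coeff_add, Finsupp.add_apply, hf, hg]
      show _ = (((f + g).coeff h : ℤ) : R)
      rw [MonoidAlgebra.coeff_add, Finsupp.add_apply, Int.cast_add]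
  | single a b =>
      rw [castHomMA_single]
      rw [MonoidAlgebra.coeff_single, MonoidAlgebra.coeff_single]
      rw [Finsupp.single_apply, Finsupp.single_apply]
      split_ifs <;> simp

lemma simpleQ_eq_sgen (T : Set H) : simpleQ T = sgen ℚ T := rfl

lemma simpleQ_apply (T : Set H) (h : H) : (simpleQ T).coeff h = if h ∈ T then 1 else 0 :=
  sgen_apply ℚ T h

end Helpers

section SchurProof
set_option linter.unusedSectionVars false

variable [CommGroup H] [Fintype H]

lemma SRing.mul_mem_carrier (A : SRing H) {x y : MonoidAlgebra ℚ H}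
    (hx : x ∈ A.carrier) (hy : y ∈ A.carrier) : x * y ∈ A.carrier := by
  have h : A.carrier * A.carrier ≤ A.carrier := by
    rw [SRing.carrier, Submodule.span_mul_span]
    refine Submodule.span_le.2 ?_
    rintro z hz
    obtain ⟨a, ha, b, hb, rfl⟩ := hz
    obtain ⟨T, hT, rfl⟩ := ha
    obtain ⟨S, hS, rfl⟩ := hb
    exact A.mul_mem T hT S hS
  exact h (Submodule.mul_mem_mul hx hy)

lemma SRing.pow_mem_carrier (A : SRing H) {x : MonoidAlgebra ℚ H}
    (hx : x ∈ A.carrier) : ∀ n : ℕ, 0 < n → x ^ n ∈ A.carrier := by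
  intro n hn
  induction n with
  | zero => omega
  | succ m ih =>
      rcases Nat.eq_zero_or_pos m with rfl | hm
      · simpa using hx
      · rw [pow_succ]; exact A.mul_mem_carrier (ih hm) hx

lemma SRing.apply_eq (A : SRing H) {x : MonoidAlgebra ℚ H} (hx : x ∈ A.carrier)
    {B : Set H} (hB : B ∈ A.basicSets) {h₁ h₂ : H} (hm1 : h₁ ∈ B) (hm2 : h₂ ∈ B) :
    x.coeff h₁ = x.coeff h₂ := by
  induction hx using Submodule.span_induction with
  | mem z hz =>
      obtain ⟨S, hS, rfl⟩ := hz
      rw [simpleQ_apply, simpleQ_apply]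
      have hiff : h₁ ∈ S ↔ h₂ ∈ S := by
        constructor <;> intro hm
        · have : S = B := (A.exists_unique_mem h₁).unique ⟨hS, hm⟩ ⟨hB, hm1⟩
          exact this ▸ hm2
        · have : S = B := (A.exists_unique_mem h₂).unique ⟨hS, hm⟩ ⟨hB, hm2⟩
          exact this ▸ hm1
      by_cases h : h₁ ∈ S
      · rw [if_pos h, if_pos (hiff.1 h)]
      · rw [if_neg h, if_neg (fun hc => h (hiff.2 hc))]
  | zero => simp
  | add x y _ _ ihx ihy =>
      show (x + y).coeff h₁ = (x + y).coeff h₂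
      rw [MonoidAlgebra.coeff_add, Finsupp.add_apply, Finsupp.add_apply, ihx, ihy]
  | smul c x _ ih =>
      show (c • x).coeff h₁ = (c • x).coeff h₂
      rw [MonoidAlgebra.coeff_smul, Finsupp.smul_apply, Finsupp.smul_apply, ih]

lemma SRing.mem_iff_mem (A : SRing H) {S : Set H} (hS : A.IsSubset S)
    {B : Set H} (hB : B ∈ A.basicSets) {h₁ h₂ : H} (hm1 : h₁ ∈ B) (hm2 : h₂ ∈ B) :
    h₁ ∈ S ↔ h₂ ∈ S := by
  have := A.apply_eq hS hB hm1 hm2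
  rw [simpleQ_apply, simpleQ_apply] at this
  split_ifs at this with ha hb
  all_goals tauto

lemma SRing.isSubset_of_const (A : SRing H) {S : Set H}
    (hc : ∀ B ∈ A.basicSets, ∀ h₁ ∈ B, ∀ h₂ ∈ B, h₁ ∈ S → h₂ ∈ S) :
    A.IsSubset S := by
  classical
  have key : simpleQ S = ∑ B ∈ (Set.toFinite A.basicSets).toFinset,
      (if B ⊆ S then simpleQ B else 0) := by
    ext h
    rw [simpleQ_apply, MonoidAlgebra.coeff_sum, Finsupp.finset_sum_apply]
    obtain ⟨B₀, ⟨hB₀, hh⟩, huniq⟩ := A.exists_unique_mem h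
    rw [Finset.sum_eq_single B₀]
    · by_cases hsub : B₀ ⊆ S
      · rw [if_pos hsub, simpleQ_apply, if_pos hh, if_pos (hsub hh)]
      · rw [if_neg hsub, if_neg (fun hS => hsub (fun b hb => hc B₀ hB₀ h hh b hb hS))]; rfl
    · intro B hB hne
      by_cases hsub : B ⊆ S
      · rw [if_pos hsub, simpleQ_apply, if_neg
          (fun hhB => hne (huniq B ⟨(Set.Finite.mem_toFinset _).1 hB, hhB⟩))]
      · rw [if_neg hsub]; rfl
    · intro habs; exact absurd ((Set.Finite.mem_toFinset _).2 hB₀) habs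
  rw [SRing.IsSubset, key]
  refine Submodule.sum_mem _ ?_
  intro B hB
  split_ifs
  · exact Submodule.subset_span ⟨B, (Set.Finite.mem_toFinset _).1 hB, rfl⟩
  · exact Submodule.zero_mem _

lemma sgen_pow_char (p : ℕ) [Fact p.Prime] (T : Set H)
    (hp : Nat.Coprime p (Fintype.card H)) :
    (sgen (ZMod p) T) ^ p = sgen (ZMod p) ((fun h : H => h ^ p) '' T) := by
  haveI : CharP (MonoidAlgebra (ZMod p) H) p := by
    refine charP_of_injective_ringHom
      (f := (MonoidAlgebra.singleOneRingHom : ZMod p →+* MonoidAlgebra (ZMod p) H)) ?_ p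
    intro a b hab
    exact Finsupp.single_injective (1 : H) (congrArg MonoidAlgebra.coeff hab)
  haveI : ExpChar (MonoidAlgebra (ZMod p) H) p := ExpChar.prime Fact.out
  have hinj : Function.Injective fun h : H => h ^ p := by
    have := (powCoprime (G := H) (n := p)
      (by simpa [Nat.card_eq_fintype_card] using hp.symm)).injective
    exact this
  rw [sgen, sum_pow_char]
  simp_rw [MonoidAlgebra.single_pow, one_pow]
  rw [sgen, Set.toFinset_image, Finset.sum_image (fun a _ b _ hab => hinj hab)]

lemma SRing.isSubset_pow_prime (A : SRing H) {S : Set H} (hS : A.IsSubset S)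
    {p : ℕ} (hp : p.Prime) (hcop : Nat.Coprime p (Fintype.card H)) :
    A.IsSubset ((fun h : H => h ^ p) '' S) := by
  haveI : Fact p.Prime := ⟨hp⟩
  set z := (sgen ℤ S) ^ p with hz
  have hQ : castHomMA ℚ z = simpleQ S ^ p := by
    rw [hz, map_pow, castHomMA_sgen, simpleQ_eq_sgen]
  have hmem : castHomMA ℚ z ∈ A.carrier := by
    rw [hQ]; exact A.pow_mem_carrier hS p hp.pos
  have hP : castHomMA (ZMod p) z = sgen (ZMod p) ((fun h : H => h ^ p) '' S) := by
    rw [hz, map_pow, castHomMA_sgen, sgen_pow_char p S hcop]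
  apply A.isSubset_of_const
  intro B hB h₁ hh₁ h₂ hh₂ hmem1
  have e1 : (castHomMA ℚ z).coeff h₁ = (castHomMA ℚ z).coeff h₂ := A.apply_eq hmem hB hh₁ hh₂
  rw [castHomMA_apply, castHomMA_apply] at e1
  have e2 : z.coeff h₁ = z.coeff h₂ := by exact_mod_cast e1
  have e3 : (sgen (ZMod p) ((fun h : H => h ^ p) '' S)).coeff h₁
      = (sgen (ZMod p) ((fun h : H => h ^ p) '' S)).coeff h₂ := by
    rw [← hP, castHomMA_apply, castHomMA_apply, e2]
  rw [sgen_apply, sgen_apply, if_pos hmem1] at e3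
  by_contra hcon
  rw [if_neg hcon] at e3
  exact one_ne_zero e3

lemma SRing.isSubset_pow (A : SRing H) :
    ∀ n : ℕ, 0 < n → Nat.Coprime n (Fintype.card H) →
    ∀ S : Set H, A.IsSubset S → A.IsSubset ((fun h : H => h ^ n) '' S) := by
  intro n
  induction n using Nat.strong_induction_on with
  | _ n ih =>
    intro hn hcop S hS
    rcases eq_or_ne n 1 with rfl | hne
    · simpa using hS
    · obtain ⟨p, hp, hdvd⟩ := Nat.exists_prime_and_dvd hne
      obtain ⟨m, rfl⟩ := hdvd
      have hm : 0 < m := Nat.pos_of_ne_zero (fun hm0 => by subst hm0; simp at hn)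
      have hmn : m < p * m := by
        have h2 := hp.two_le
        calc m = 1 * m := (one_mul m).symm
        _ < p * m := (Nat.mul_lt_mul_right hm).2 (by omega)
      have hcm : Nat.Coprime m (Fintype.card H) :=
        Nat.Coprime.coprime_dvd_left (Dvd.intro_left p rfl) hcop
      have hcp : Nat.Coprime p (Fintype.card H) :=
        Nat.Coprime.coprime_dvd_left (Dvd.intro m rfl) hcop
      have h1 := ih m hmn hm hcm S hS
      have h2 := A.isSubset_pow_prime h1 hp hcp
      have himg : (fun h : H => h ^ p) '' ((fun h : H => h ^ m) '' S)
          = (fun h : H => h ^ (p * m)) '' S := by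
        rw [← Set.image_comp]
        refine Set.image_congr fun x _ => ?_
        show (x ^ m) ^ p = x ^ (p * m)
        rw [← pow_mul, mul_comm]
      rwa [himg] at h2

lemma pow_mod_card' (h : H) (a : ℕ) : h ^ a = h ^ (a % Fintype.card H) := by
  conv_lhs => rw [← Nat.div_add_mod a (Fintype.card H)]
  rw [pow_add, pow_mul, pow_card_eq_one, one_pow, one_mul]

end SchurProof

/-- Schur's first theorem on multipliers. -/
theorem stmt15 {H : Type*} [CommGroup H] [Fintype H] (A : SRing H)
    (T : Set H) (hT : T ∈ A.basicSets) (k : ℤ)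
    (hk : Int.gcd k (Fintype.card H) = 1) :
    (fun h : H => h ^ k) '' T ∈ A.basicSets := by
  classical
  rcases eq_or_ne (Fintype.card H) 1 with hcard | hcard
  · haveI : Subsingleton H := Fintype.card_le_one_iff_subsingleton.mp (le_of_eq hcard)
    obtain ⟨t, ht⟩ := A.nonempty_of_mem T hT
    have himg : (fun h : H => h ^ k) '' T = T := by
      ext x
      constructor
      · intro _; rw [Subsingleton.elim x t]; exact ht
      · intro _; exact ⟨t, ht, Subsingleton.elim _ _⟩
    rw [himg]; exact hT
  · set c := Fintype.card H with hc
    have hcpos : 0 < c := Fintype.card_pos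
    have hc2 : 1 < c := by omega
    set n := (k % (c : ℤ)).toNat with hn
    have hnn : ((n : ℤ)) = k % (c : ℤ) :=
      Int.toNat_of_nonneg (Int.emod_nonneg k (by exact_mod_cast hcpos.ne'))
    have hkn : ∀ h : H, h ^ k = h ^ n := by
      intro h
      conv_lhs => rw [← Int.mul_ediv_add_emod k (c : ℤ)]
      rw [zpow_add, zpow_mul, ← hnn, zpow_natCast, zpow_natCast, pow_card_eq_one,
        one_zpow, one_mul]
    -- coprimality of n with c
    have hcop : Nat.Coprime n c := by
      have hd1 : (Nat.gcd n c : ℤ) ∣ (n : ℤ) := Int.natCast_dvd_natCast.2 (Nat.gcd_dvd_left n c)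
      have hd2 : (Nat.gcd n c : ℤ) ∣ (c : ℤ) := Int.natCast_dvd_natCast.2 (Nat.gcd_dvd_right n c)
      have hdk : (Nat.gcd n c : ℤ) ∣ k := by
        have : k = (c : ℤ) * (k / c) + (n : ℤ) := by rw [hnn, Int.mul_ediv_add_emod]
        rw [this]
        exact dvd_add (Dvd.dvd.mul_right hd2 _) hd1
      have : (Nat.gcd n c : ℤ) ∣ (Int.gcd k (c : ℤ) : ℤ) := Int.natCast_dvd_natCast.2 (Int.dvd_gcd hdk hd2)
      have h1 : Nat.gcd n c ∣ Int.gcd k (c : ℤ) := Int.natCast_dvd_natCast.1 this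
      rw [hk] at h1
      exact Nat.eq_one_of_dvd_one h1
    have hnpos : 0 < n := by
      rcases Nat.eq_zero_or_pos n with h0 | h
      · exfalso
        rw [h0] at hcop
        rw [Nat.coprime_zero_left] at hcop
        omega
      · exact h
    rw [show (fun h : H => h ^ k) = fun h : H => h ^ n from funext hkn]
    have hTsub : A.IsSubset T := Submodule.subset_span ⟨T, hT, rfl⟩
    have hTn := A.isSubset_pow n hnpos hcop T hTsub
    obtain ⟨t, ht⟩ := A.nonempty_of_mem T hT
    obtain ⟨B, ⟨hB, htB⟩, huniq⟩ := A.exists_unique_mem (t ^ n)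
    have htn : t ^ n ∈ (fun h : H => h ^ n) '' T := ⟨t, ht, rfl⟩
    have hBsub : B ⊆ (fun h : H => h ^ n) '' T := fun b hb =>
      (A.mem_iff_mem hTn hB htB hb).1 htn
    -- inverse exponent m
    obtain ⟨m, -, hmeq⟩ := Nat.exists_mul_mod_eq_one_of_coprime hcop hc2
    have hmpos : 0 < m := by
      rcases Nat.eq_zero_or_pos m with rfl | h
      · rw [Nat.mul_zero, Nat.zero_mod] at hmeq; omega
      · exact h
    have hpow_nm : ∀ h : H, (h ^ n) ^ m = h := by
      intro h
      rw [← pow_mul, pow_mod_card', ← hc, hmeq, pow_one]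
    have hcopm : Nat.Coprime m c := by
      have hnm : Nat.Coprime (n * m) c := by
        have : Nat.gcd c (n * m) = 1 := by
          rw [Nat.gcd_rec c (n * m), hmeq, Nat.gcd_rec, Nat.mod_one, Nat.gcd_zero_left]
        exact Nat.Coprime.symm this
      exact Nat.Coprime.coprime_dvd_left (dvd_mul_left m n) hnm
    have hBm : (fun h : H => h ^ m) '' B ⊆ T := by
      rintro _ ⟨b, hb, rfl⟩
      obtain ⟨s, hsT, rfl⟩ := hBsub hb
      show ((s ^ n) ^ m) ∈ T
      rw [hpow_nm]; exact hsT
    have hBsubm := A.isSubset_pow m hmpos hcopm B (Submodule.subset_span ⟨B, hB, rfl⟩)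
    have htBm : t ∈ (fun h : H => h ^ m) '' B := ⟨t ^ n, htB, hpow_nm t⟩
    have hTBm : T ⊆ (fun h : H => h ^ m) '' B := fun x hx =>
      (A.mem_iff_mem hBsubm hT ht hx).1 htBm
    have hBmT : (fun h : H => h ^ m) '' B = T := Set.Subset.antisymm hBm hTBm
    have hfinal : (fun h : H => h ^ n) '' T = B := by
      rw [← hBmT, ← Set.image_comp]
      have hmn : ∀ b : H, ((fun h : H => h ^ n) ∘ fun h : H => h ^ m) b = b := by
        intro b
        show (b ^ m) ^ n = b
        rw [← pow_mul, mul_comm, pow_mul, hpow_nm]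
      calc ((fun h : H => h ^ n) ∘ fun h : H => h ^ m) '' B
          = id '' B := Set.image_congr fun b _ => hmn b
        _ = B := Set.image_id B
    rw [hfinal]; exact hB

end
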